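/- For every integer m ≥ 2 and real t > 0, R_m(t) = ∑_{k=m}^∞ t^k/(k!)^{1/2} satisfies R_m(t) ≤ (4e/π)^{1/4} (e/m)^{(m/2) - (1/4)} t^m exp(c_m t^2 / 2), where c_m = (1 + 1/m)^{-m} e. -/

import Mathlib

open Real Finset

private lemma stirling_lb (n : ℕ) (hn : 1 ≤ n) :
    Real.sqrt (2 * Real.pi * n) * ((n : ℝ) / Real.exp 1) ^ n ≤ (n.factorial : ℝ) := by
  have hn' : (0:ℝ) < n := by exact_mod_cast hn
  have h1 : Real.sqrt Real.pi ≤ Stirling.stirlingSeq n := by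
    have ha : Antitone (Stirling.stirlingSeq ∘ Nat.succ) := Stirling.stirlingSeq'_antitone
    have ht : Filter.Tendsto (Stirling.stirlingSeq ∘ Nat.succ) Filter.atTop
        (nhds (Real.sqrt Real.pi)) :=
      Stirling.tendsto_stirlingSeq_sqrt_pi.comp (Filter.tendsto_add_atTop_nat 1)
    obtain ⟨k, rfl⟩ : ∃ k, n = k + 1 := ⟨n - 1, by omega⟩
    exact ha.le_of_tendsto ht k
  have hd : 0 < Real.sqrt (2 * n : ℝ) * ((n : ℝ) / Real.exp 1) ^ n := by positivity
  rw [Stirling.stirlingSeq, le_div_iff₀ hd] at h1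
  calc Real.sqrt (2 * Real.pi * n) * ((n:ℝ)/Real.exp 1)^n
      = Real.sqrt Real.pi * (Real.sqrt (2*n:ℝ) * ((n:ℝ)/Real.exp 1)^n) := by
        rw [show 2*Real.pi*(n:ℝ) = Real.pi * (2*n) by ring, Real.sqrt_mul Real.pi_pos.le]
        ring
    _ ≤ _ := h1

private lemma pow_one_add_mono {m k : ℕ} (hm : 1 ≤ m) (hk : m ≤ k) :
    ((1 : ℝ) + 1 / m) ^ m ≤ ((1 : ℝ) + 1 / k) ^ k := by
  have hm' : (0:ℝ) < m := by exact_mod_cast hm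
  have hk' : (0:ℝ) < k := by exact_mod_cast (by omega : 0 < k)
  have hp : (1:ℝ) ≤ (k:ℝ)/m := (one_le_div hm').2 (by exact_mod_cast hk)
  have hb := one_add_mul_self_le_rpow_one_add (le_trans (by norm_num) (show (0:ℝ) ≤ 1/k by positivity)) hp
  have h1 : (1:ℝ) + 1/m ≤ ((1:ℝ)+1/k) ^ ((k:ℝ)/m) := by
    have : (1:ℝ) + (k:ℝ)/m * (1/k) = 1 + 1/m := by field_simp
    rwa [this] at hb
  have h2 : ((1:ℝ)+1/m)^m ≤ (((1:ℝ)+1/k)^((k:ℝ)/m))^m :=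
    pow_le_pow_left₀ (by positivity) h1 m
  calc ((1:ℝ)+1/m)^m ≤ (((1:ℝ)+1/k)^((k:ℝ)/m))^m := h2
    _ = ((1:ℝ)+1/k)^k := by
        rw [← Real.rpow_natCast (((1:ℝ)+1/k)^((k:ℝ)/m)) m, ← Real.rpow_mul (by positivity),
          div_mul_cancel₀ _ hm'.ne', Real.rpow_natCast]
private lemma key_pow (m : ℕ) (hm : 2 ≤ m) (j : ℕ) :
    (m:ℝ)^(m-1) * (((1:ℝ)+1/m)^m)^j * (j.factorial : ℝ) ≤ ((m:ℝ)+j)^(m-1+j) := by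
  induction j with
  | zero => simp
  | succ j ih =>
    have hxpos : (0:ℝ) < (m:ℝ) + j := by positivity
    have hE : ((1:ℝ)+1/m)^m ≤ (1+1/((m:ℝ)+j))^(m+j) := by
      have h := pow_one_add_mono (show 1 ≤ m by omega) (show m ≤ m+j by omega)
      have hc : ((m+j:ℕ):ℝ) = (m:ℝ)+j := by push_cast; ring
      rwa [hc] at h
    have hjx : ((j:ℝ)+1) ≤ (m:ℝ)+j := by
      have : (1:ℝ) ≤ m := by exact_mod_cast (by omega : 1 ≤ m)
      linarith
    have hLnn : (0:ℝ) ≤ (m:ℝ)^(m-1) * (((1:ℝ)+1/m)^m)^j * (j.factorial : ℝ) := by positivity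
    have step1 : (m:ℝ)^(m-1) * (((1:ℝ)+1/m)^m)^(j+1) * ((j+1).factorial : ℝ)
        = ((m:ℝ)^(m-1) * (((1:ℝ)+1/m)^m)^j * (j.factorial : ℝ)) * (((1:ℝ)+1/m)^m * ((j:ℝ)+1)) := by
      rw [Nat.factorial_succ]; push_cast; ring
    have step2 : ((m:ℝ)^(m-1) * (((1:ℝ)+1/m)^m)^j * (j.factorial : ℝ)) * (((1:ℝ)+1/m)^m * ((j:ℝ)+1))
        ≤ ((m:ℝ)+j)^(m-1+j) * ((1+1/((m:ℝ)+j))^(m+j) * ((m:ℝ)+j)) := by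
      apply mul_le_mul ih (mul_le_mul hE hjx (by positivity) (by positivity)) (by positivity)
        (by positivity)
    have step3 : ((m:ℝ)+j)^(m-1+j) * ((1+1/((m:ℝ)+j))^(m+j) * ((m:ℝ)+j))
        = ((m:ℝ)+(j+1))^(m-1+(j+1)) := by
      have e1 : m-1+(j+1) = m+j := by omega
      have e2 : m+j = (m-1+j)+1 := by omega
      have e3 : (m:ℝ)+(j+1) = ((m:ℝ)+j) * (1+1/((m:ℝ)+j)) := by field_simp; ring
      rw [e1, e3, mul_pow, e2, pow_succ]
      ring
    calc (m:ℝ)^(m-1) * (((1:ℝ)+1/m)^m)^(j+1) * ((j+1).factorial : ℝ)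
        = _ := step1
      _ ≤ _ := step2
      _ = _ := step3
      _ = ((m:ℝ)+(j+1:ℕ))^(m-1+(j+1)) := by push_cast; ring_nf

private lemma tele_term (x : ℝ) (hx : 2 ≤ x) :
    1 / Real.sqrt (x^3) ≤ 2 / Real.sqrt (x-1) - 2 / Real.sqrt x := by
  set a := Real.sqrt (x-1) with hadef
  set b := Real.sqrt x with hbdef
  have ha2 : a^2 = x - 1 := Real.sq_sqrt (by linarith)
  have hb2 : b^2 = x := Real.sq_sqrt (by linarith)
  have hapos : 0 < a := Real.sqrt_pos.2 (by linarith)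
  have hbpos : 0 < b := Real.sqrt_pos.2 (by linarith)
  have hab : a ≤ b := Real.sqrt_le_sqrt (by linarith)
  have hx3 : Real.sqrt (x^3) = b^3 := by
    rw [show x^3 = (b^3)^2 by rw [← hb2]; ring]
    exact Real.sqrt_sq (by positivity)
  rw [hx3, div_sub_div _ _ hapos.ne' hbpos.ne', div_le_div_iff₀ (by positivity) (by positivity)]
  have h1 : (b-a)*(a+b) = 1 := by nlinarith
  nlinarith [mul_pos hapos hbpos, mul_pos (mul_pos hapos hbpos) hbpos,
    mul_le_mul_of_nonneg_right hab (mul_pos hapos hbpos).le,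
    mul_le_mul_of_nonneg_right hab (mul_pos hbpos hbpos).le,
    mul_pos (mul_pos hbpos hbpos) hbpos]

private lemma tele (m : ℕ) (hm : 2 ≤ m) (s : Finset ℕ) :
    ∑ j ∈ s, 1 / Real.sqrt (((m:ℝ)+j)^3) ≤ 2 / Real.sqrt ((m:ℝ)-1) := by
  have hm' : (2:ℝ) ≤ m := by exact_mod_cast hm
  set g : ℕ → ℝ := fun j => 2 / Real.sqrt ((m:ℝ)+j-1) with hg
  have hterm : ∀ j : ℕ, 1 / Real.sqrt (((m:ℝ)+j)^3) ≤ g j - g (j+1) := by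
    intro j
    have := tele_term ((m:ℝ)+j) (by have : (0:ℝ) ≤ j := Nat.cast_nonneg j; linarith)
    simp only [hg]
    have e1 : (m:ℝ)+(j+1:ℕ)-1 = (m:ℝ)+j := by push_cast; ring
    rw [e1]
    exact this
  obtain ⟨n, hsn⟩ := s.exists_nat_subset_range
  calc ∑ j ∈ s, 1 / Real.sqrt (((m:ℝ)+j)^3)
      ≤ ∑ j ∈ s, (g j - g (j+1)) := Finset.sum_le_sum (fun j _ => hterm j)
    _ ≤ ∑ j ∈ range n, (g j - g (j+1)) := by
        apply Finset.sum_le_sum_of_subset_of_nonneg hsn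
        intro j _ _
        exact le_trans (by positivity) (hterm j)
    _ = g 0 - g n := Finset.sum_range_sub' g n
    _ ≤ g 0 := by
        have : 0 ≤ g n := by positivity
        linarith
    _ = 2 / Real.sqrt ((m:ℝ)-1) := by simp [hg]

private lemma prefactor (m : ℕ) (hm : 2 ≤ m) :
    Real.sqrt (2 / Real.sqrt ((m:ℝ)-1)) *
      Real.sqrt (Real.exp 1 ^ m / (Real.sqrt (2*Real.pi) * (m:ℝ)^(m-1)))
      ≤ (4 * Real.exp 1 / Real.pi) ^ ((1:ℝ)/4) * (Real.exp 1 / (m:ℝ)) ^ ((m:ℝ)/2 - 1/4) := by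
  have hm' : (2:ℝ) ≤ m := by exact_mod_cast hm
  have hmpos : (0:ℝ) < m := by linarith
  have he : (0:ℝ) < Real.exp 1 := Real.exp_pos 1
  have hπ : (0:ℝ) < Real.pi := Real.pi_pos
  refine le_of_pow_le_pow_left₀ (n := 4) (by norm_num) (by positivity) ?_
  have hA : (0:ℝ) ≤ 2 / Real.sqrt ((m:ℝ)-1) := by positivity
  have hB : (0:ℝ) ≤ Real.exp 1 ^ m / (Real.sqrt (2*Real.pi) * (m:ℝ)^(m-1)) := by positivity
  have hL4 : (Real.sqrt (2 / Real.sqrt ((m:ℝ)-1)) *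
      Real.sqrt (Real.exp 1 ^ m / (Real.sqrt (2*Real.pi) * (m:ℝ)^(m-1)))) ^ 4
      = (4/((m:ℝ)-1)) * ((Real.exp 1^m)^2 / (2*Real.pi*((m:ℝ)^(m-1))^2)) := by
    rw [mul_pow, show (4:ℕ) = 2*2 from rfl, pow_mul, pow_mul, Real.sq_sqrt hA, Real.sq_sqrt hB,
      div_pow, div_pow, mul_pow, Real.sq_sqrt (by linarith : (0:ℝ) ≤ (m:ℝ)-1),
      Real.sq_sqrt (by positivity : (0:ℝ) ≤ 2*Real.pi)]
    norm_num
  rw [hL4, mul_pow]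
  have hR1 : ((4 * Real.exp 1 / Real.pi) ^ ((1:ℝ)/4)) ^ 4 = 4 * Real.exp 1 / Real.pi := by
    rw [← Real.rpow_natCast ((4 * Real.exp 1 / Real.pi) ^ ((1:ℝ)/4)) 4,
      ← Real.rpow_mul (by positivity)]
    norm_num
  have hR2 : ((Real.exp 1 / (m:ℝ)) ^ ((m:ℝ)/2 - 1/4)) ^ 4
      = (Real.exp 1 / (m:ℝ)) ^ (2*m-1 : ℕ) := by
    rw [← Real.rpow_natCast ((Real.exp 1 / (m:ℝ)) ^ ((m:ℝ)/2 - 1/4)) 4,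
      ← Real.rpow_mul (by positivity), ← Real.rpow_natCast (Real.exp 1 / (m:ℝ)) (2*m-1)]
    congr 1
    push_cast [Nat.cast_sub (by omega : 1 ≤ 2*m)]
    ring
  rw [hR1, hR2, div_pow]
  have hE : Real.exp 1 ^ (2*m-1) * Real.exp 1 = (Real.exp 1 ^ m)^2 := by
    rw [← pow_succ, ← pow_mul]
    congr 1
    omega
  have hM : (m:ℝ) ^ (2*m-1) = ((m:ℝ)^(m-1))^2 * m := by
    rw [← pow_mul, ← pow_succ]
    congr 1
    omega
  rw [hM, show Real.exp 1 ^ (2*m-1) = (Real.exp 1 ^ m)^2 / Real.exp 1 from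
    (eq_div_iff he.ne').2 hE]
  have hP : (0:ℝ) < Real.exp 1 ^ m := by positivity
  have hQ : (0:ℝ) < (m:ℝ)^(m-1) := by positivity
  have hL : 4/((m:ℝ)-1) * ((Real.exp 1 ^ m)^2/(2*Real.pi*((m:ℝ)^(m-1))^2))
      = 4*(Real.exp 1 ^ m)^2 / (((m:ℝ)-1)*(2*Real.pi*((m:ℝ)^(m-1))^2)) := by
    field_simp
  have hR : 4*Real.exp 1/Real.pi * (((Real.exp 1 ^ m)^2/Real.exp 1)/(((m:ℝ)^(m-1))^2*(m:ℝ)))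
      = 4*(Real.exp 1 ^ m)^2 / (Real.pi*(((m:ℝ)^(m-1))^2*(m:ℝ))) := by
    field_simp
  rw [hL, hR]
  have hden : Real.pi*(((m:ℝ)^(m-1))^2*(m:ℝ)) ≤ ((m:ℝ)-1)*(2*Real.pi*((m:ℝ)^(m-1))^2) := by
    nlinarith [mul_pos hπ (mul_pos hQ hQ), hm']
  gcongr
theorem stmt_15 (t : ℝ) (ht : 0 < t) (m : ℕ) (hm : 2 ≤ m) :
    (∑' k : ℕ, t ^ (m + k) / Real.sqrt (Nat.factorial (m + k))) ≤
      (4 * Real.exp 1 / Real.pi) ^ ((1 : ℝ) / 4) *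
        (Real.exp 1 / (m : ℝ)) ^ ((m : ℝ) / 2 - 1 / 4) * t ^ m *
          Real.exp ((1 + 1 / (m : ℝ)) ^ (-(m : ℝ)) * Real.exp 1 * t ^ 2 / 2) := by
  have hm' : (2:ℝ) ≤ m := by exact_mod_cast hm
  have hmpos : (0:ℝ) < m := by linarith
  have he : (0:ℝ) < Real.exp 1 := Real.exp_pos 1
  have hπ : (0:ℝ) < Real.pi := Real.pi_pos
  set E : ℝ := ((1:ℝ) + 1/(m:ℝ))^m with hEdef
  have hEpos : 0 < E := by positivity
  have hrpow : ((1:ℝ) + 1/(m:ℝ)) ^ (-(m:ℝ)) = E⁻¹ := by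
    rw [show -(m:ℝ) = -(m:ℕ) by push_cast; ring, Real.rpow_neg (by positivity),
      Real.rpow_natCast]
  rw [hrpow]
  set c : ℝ := E⁻¹ * Real.exp 1 with hcdef
  have hc0 : 0 ≤ c * t^2 := by positivity
  set u : ℕ → ℝ := fun j => 1 / Real.sqrt (((m:ℝ)+j)^3) with hu
  set v : ℕ → ℝ := fun j =>
    Real.exp 1 ^ (m+j) * t^(2*(m+j)) / (Real.sqrt (2*Real.pi) * ((m:ℝ)+j)^(m-1+j)) with hv
  have hunn : ∀ j, 0 ≤ u j := fun j => by positivity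
  have hvnn : ∀ j, 0 ≤ v j := fun j => by positivity
  -- pointwise bound via Stirling
  have hA : ∀ j : ℕ, t^(m+j)/Real.sqrt ((m+j).factorial) ≤ Real.sqrt (u j) * Real.sqrt (v j) := by
    intro j
    have hx : (0:ℝ) < (m:ℝ)+j := by positivity
    have hst := stirling_lb (m+j) (by omega)
    rw [show ((m+j:ℕ):ℝ) = (m:ℝ)+j by push_cast; ring] at hst
    have hL : Real.sqrt (t^(2*(m+j)) / ((m+j).factorial : ℝ))
        = t^(m+j)/Real.sqrt ((m+j).factorial) := by
      rw [Real.sqrt_div (by positivity) _, show t^(2*(m+j)) = (t^(m+j))^2 by ring,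
        Real.sqrt_sq (by positivity)]
    rw [← hL, ← Real.sqrt_mul (hunn j)]
    apply Real.sqrt_le_sqrt
    have huv : u j * v j
        = t^(2*(m+j)) / (Real.sqrt (2*Real.pi*((m:ℝ)+j)) * (((m:ℝ)+j)/Real.exp 1)^(m+j)) := by
      simp only [hu, hv]
      have hsx : Real.sqrt (((m:ℝ)+j)^3) = ((m:ℝ)+j) * Real.sqrt ((m:ℝ)+j) := by
        rw [show ((m:ℝ)+j)^3 = ((m:ℝ)+j)^2 * ((m:ℝ)+j) by ring,
          Real.sqrt_mul (by positivity), Real.sqrt_sq hx.le]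
      rw [Real.sqrt_mul (by positivity : (0:ℝ) ≤ 2*Real.pi), div_pow, hsx]
      rw [show m+j = (m-1+j)+1 by omega]
      rw [pow_succ ((m:ℝ)+j), pow_succ (Real.exp 1), show 2*((m-1+j)+1) = 2*(m-1+j)+2 by ring]
      have h1 : Real.sqrt ((m:ℝ)+j) ≠ 0 := by positivity
      have h2 : Real.sqrt (2*Real.pi) ≠ 0 := by positivity
      field_simp
    rw [huv]
    gcongr
  -- the bound on ∑ v
  have hvle : ∀ j : ℕ, v j ≤ (Real.exp 1 ^ m * t^(2*m) / (Real.sqrt (2*Real.pi) * (m:ℝ)^(m-1)))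
      * (c*t^2)^j / (j.factorial : ℝ) := by
    intro j
    have hkey := key_pow m hm j
    have hfac : (0:ℝ) < (j.factorial : ℝ) := by exact_mod_cast j.factorial_pos
    have step1 : v j ≤ Real.exp 1 ^ (m+j) * t^(2*(m+j))
        / (Real.sqrt (2*Real.pi) * ((m:ℝ)^(m-1) * E^j * (j.factorial : ℝ))) := by
      simp only [hv]
      gcongr
    refine step1.trans (le_of_eq ?_)
    have h2 : Real.sqrt (2*Real.pi) ≠ 0 := by positivity
    rw [hcdef, pow_add (Real.exp 1) m j, show 2*(m+j) = 2*m + 2*j by ring, pow_add t]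
    field_simp
    ring_nf
    rw [mul_assoc _ (E ^ j), ← mul_pow, mul_inv_cancel₀ hEpos.ne', one_pow, mul_one]
  -- RHS nonneg
  have hRnn : (0:ℝ) ≤ (4 * Real.exp 1 / Real.pi) ^ ((1 : ℝ) / 4) *
        (Real.exp 1 / (m : ℝ)) ^ ((m : ℝ) / 2 - 1 / 4) * t ^ m *
          Real.exp (c * t ^ 2 / 2) := by positivity
  apply tsum_le_of_sum_le' hRnn
  intro s
  have hCS : ∑ j ∈ s, Real.sqrt (u j) * Real.sqrt (v j) ≤
      Real.sqrt (∑ j ∈ s, u j) * Real.sqrt (∑ j ∈ s, v j) := by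
    have h := Finset.sum_mul_sq_le_sq_mul_sq s (fun j => Real.sqrt (u j))
      (fun j => Real.sqrt (v j))
    have hnn : 0 ≤ ∑ j ∈ s, Real.sqrt (u j) * Real.sqrt (v j) :=
      Finset.sum_nonneg fun j _ => by positivity
    calc ∑ j ∈ s, Real.sqrt (u j) * Real.sqrt (v j)
        = Real.sqrt ((∑ j ∈ s, Real.sqrt (u j) * Real.sqrt (v j))^2) := (Real.sqrt_sq hnn).symm
      _ ≤ Real.sqrt ((∑ j ∈ s, Real.sqrt (u j)^2) * (∑ j ∈ s, Real.sqrt (v j)^2)) :=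
          Real.sqrt_le_sqrt h
      _ = Real.sqrt (∑ j ∈ s, u j) * Real.sqrt (∑ j ∈ s, v j) := by
          rw [Real.sqrt_mul (Finset.sum_nonneg fun j _ => by positivity)]
          congr 2
          · exact Finset.sum_congr rfl fun j _ => Real.sq_sqrt (hunn j)
          · exact Finset.sum_congr rfl fun j _ => Real.sq_sqrt (hvnn j)
  have hsumu : ∑ j ∈ s, u j ≤ 2 / Real.sqrt ((m:ℝ)-1) := tele m hm s
  set V : ℝ := Real.exp 1 ^ m * t^(2*m) / (Real.sqrt (2*Real.pi) * (m:ℝ)^(m-1)) with hV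
  have hVnn : 0 ≤ V := by positivity
  have hsumv : ∑ j ∈ s, v j ≤ V * Real.exp (c*t^2) := by
    obtain ⟨n, hsn⟩ := s.exists_nat_subset_range
    calc ∑ j ∈ s, v j ≤ ∑ j ∈ s, V * (c*t^2)^j / (j.factorial:ℝ) :=
          Finset.sum_le_sum fun j _ => hvle j
      _ ≤ ∑ j ∈ range n, V * (c*t^2)^j / (j.factorial:ℝ) :=
          Finset.sum_le_sum_of_subset_of_nonneg hsn fun j _ _ => by positivity
      _ = V * ∑ j ∈ range n, (c*t^2)^j / (j.factorial:ℝ) := by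
          rw [Finset.mul_sum]; exact Finset.sum_congr rfl fun j _ => by ring
      _ ≤ V * Real.exp (c*t^2) :=
          mul_le_mul_of_nonneg_left (Real.sum_le_exp_of_nonneg hc0 n) hVnn
  calc (∑ j ∈ s, t ^ (m + j) / Real.sqrt ((m + j).factorial))
      ≤ ∑ j ∈ s, Real.sqrt (u j) * Real.sqrt (v j) := Finset.sum_le_sum fun j _ => hA j
    _ ≤ Real.sqrt (∑ j ∈ s, u j) * Real.sqrt (∑ j ∈ s, v j) := hCS
    _ ≤ Real.sqrt (2 / Real.sqrt ((m:ℝ)-1)) * Real.sqrt (V * Real.exp (c*t^2)) :=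
        mul_le_mul (Real.sqrt_le_sqrt hsumu) (Real.sqrt_le_sqrt hsumv)
          (Real.sqrt_nonneg _) (Real.sqrt_nonneg _)
    _ = (Real.sqrt (2 / Real.sqrt ((m:ℝ)-1)) *
          Real.sqrt (Real.exp 1 ^ m / (Real.sqrt (2*Real.pi) * (m:ℝ)^(m-1)))) * t^m *
          Real.exp (c * t^2 / 2) := by
        rw [Real.sqrt_mul hVnn, ← Real.exp_half,
          show V = (Real.exp 1 ^ m / (Real.sqrt (2*Real.pi) * (m:ℝ)^(m-1))) * (t^m)^2 by
            rw [hV, show 2*m = m*2 by ring, pow_mul]; ring,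
          Real.sqrt_mul (by positivity), Real.sqrt_sq (by positivity : (0:ℝ) ≤ t^m)]
        ring
    _ ≤ _ :=
        mul_le_mul_of_nonneg_right
          (mul_le_mul_of_nonneg_right (prefactor m hm) (pow_nonneg ht.le m))
          (Real.exp_nonneg _)
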